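/- Let G = Homeo(ℝ × ℝ) be the group of self-homeomorphisms of the plane ℝ × ℝ (with the product topology), let G_L ≤ G be the subgroup of homeomorphisms h satisfying h(x,y) = (x', y) for some x' (for all (x,y)), and let G_R ≤ G be the subgroup of homeomorphisms h satisfying h(x,y) = (x, y') for some y'. Then there exists a self-homeomorphism of ℝ × ℝ that does not belong to the subgroup of G generated by G_L ∪ G_R; in particular, for every finite word w over {L, R} it is not in the set product G_{w_1}·G_{w_2}⋯G_{w_{|w|}}. -/

import Mathlib

open Complex Set

noncomputable section
namespace HomeoAlt

def toC (p : ℝ × ℝ) : ℂ := p.1 + p.2 * Complex.I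

lemma toC_def (p : ℝ × ℝ) : toC p = p.1 + p.2 * Complex.I := rfl

lemma toC_mk' (z : ℂ) : toC (z.re, z.im) = z := by
  simp [toC]

@[simp] lemma toC_re (p : ℝ × ℝ) : (toC p).re = p.1 := by simp [toC]
@[simp] lemma toC_im (p : ℝ × ℝ) : (toC p).im = p.2 := by simp [toC]

lemma toC_inj : Function.Injective toC := by
  intro p q h
  have h1 := congrArg Complex.re h
  have h2 := congrArg Complex.im h
  simp at h1 h2
  exact Prod.ext h1 h2

lemma continuous_toC : Continuous toC := by
  unfold toC; fun_prop

/-- Key comparison lemma: if `g` has a continuous logarithm `L` on `S` and `f/g`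
avoids the closed negative real axis on `S`, then `f` has a continuous logarithm
whose imaginary part differs from that of `L` by less than `π` pointwise. -/
lemma ratio_lift {S : Set ℝ} {f g L : ℝ → ℂ}
    (hL : ContinuousOn L S) (hg : ∀ t ∈ S, g t = Complex.exp (L t))
    (hf : ContinuousOn f S)
    (hrat : ∀ t ∈ S, f t / g t ∈ Complex.slitPlane) :
    ∃ M : ℝ → ℂ, ContinuousOn M S ∧ (∀ t ∈ S, f t = Complex.exp (M t)) ∧
      ∀ s ∈ S, ∀ t ∈ S,
        |(M t).im - (M s).im| ≤ |(L t).im - (L s).im| + 2 * Real.pi := by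
  have hgc : ContinuousOn g S :=
    (Complex.continuous_exp.comp_continuousOn hL).congr hg
  have hg0 : ∀ t ∈ S, g t ≠ 0 := fun t ht => by rw [hg t ht]; exact Complex.exp_ne_zero _
  have hne : ∀ t ∈ S, f t / g t ≠ 0 := fun t ht h0 => by
    have := hrat t ht
    rw [h0] at this
    simp [Complex.mem_slitPlane_iff] at this
  refine ⟨fun t => L t + Complex.log (f t / g t), ?_, ?_, ?_⟩
  · exact hL.add ((hf.div hgc hg0).clog hrat)
  · intro t ht
    rw [Complex.exp_add, Complex.exp_log (hne t ht), ← hg t ht,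
      mul_div_assoc']
    rw [mul_comm, mul_div_assoc, div_self (hg0 t ht), mul_one]
  · intro s hs t ht
    simp only [Complex.add_im]
    have h1 : |(Complex.log (f t / g t)).im| ≤ Real.pi := by
      rw [Complex.log_im]; exact Complex.abs_arg_le_pi _
    have h2 : |(Complex.log (f s / g s)).im| ≤ Real.pi := by
      rw [Complex.log_im]; exact Complex.abs_arg_le_pi _
    have key : (L t).im + (Complex.log (f t / g t)).im -
        ((L s).im + (Complex.log (f s / g s)).im)
        = ((L t).im - (L s).im) +
          ((Complex.log (f t / g t)).im - (Complex.log (f s / g s)).im) := by ring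
    rw [key]
    have h3 := abs_add_le ((L t).im - (L s).im)
      ((Complex.log (f t / g t)).im - (Complex.log (f s / g s)).im)
    have h4 := abs_sub (Complex.log (f t / g t)).im (Complex.log (f s / g s)).im
    linarith


/-- For a continuous bijection preserving the second coordinate, the first-coordinate
maps on horizontal lines are strictly monotone with a uniform direction. -/
lemma uniform_mono_snd (e : Equiv.Perm (ℝ × ℝ)) (hec : Continuous e)
    (h2 : ∀ p, (e p).2 = p.2) :
    (∀ y, StrictMono fun x => (e (x, y)).1) ∨ (∀ y, StrictAnti fun x => (e (x, y)).1) := by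
  have hcont : ∀ y, Continuous fun x => (e (x, y)).1 := fun y =>
    continuous_fst.comp (hec.comp (Continuous.prodMk_left y))
  have hinj : ∀ y, Function.Injective fun x => (e (x, y)).1 := by
    intro y a b hab
    have : e (a, y) = e (b, y) := by
      refine Prod.ext hab ?_
      rw [h2 (a, y), h2 (b, y)]
    simpa using e.injective this
  have hdich : ∀ y, StrictMono (fun x => (e (x, y)).1) ∨ StrictAnti fun x => (e (x, y)).1 :=
    fun y => (hcont y).strictMono_of_inj (hinj y)
  set D : ℝ → ℝ := fun y => (e (1, y)).1 - (e (0, y)).1 with hD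
  have hDc : Continuous D := by
    apply Continuous.sub
    · exact continuous_fst.comp (hec.comp (by fun_prop))
    · exact continuous_fst.comp (hec.comp (by fun_prop))
  have hD0 : ∀ y, D y ≠ 0 := by
    intro y h
    have : (e (1, y)).1 = (e (0, y)).1 := by simpa [hD, sub_eq_zero] using h
    exact one_ne_zero (hinj y this)
  have hsign : (∀ y, 0 < D y) ∨ ∀ y, D y < 0 := by
    by_contra h
    push_neg at h
    obtain ⟨⟨y₁, hy₁⟩, ⟨y₂, hy₂⟩⟩ := h
    have hy₁' : D y₁ < 0 := lt_of_le_of_ne hy₁ (hD0 y₁)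
    have hy₂' : 0 < D y₂ := lt_of_le_of_ne hy₂ (Ne.symm (hD0 y₂))
    have : (0 : ℝ) ∈ Set.uIcc (D y₁) (D y₂) := by
      rw [Set.mem_uIcc]; left; exact ⟨hy₁'.le, hy₂'.le⟩
    obtain ⟨y, _, hy⟩ := intermediate_value_uIcc (hDc.continuousOn (s := Set.uIcc y₁ y₂)) this
    exact hD0 y hy
  rcases hsign with h | h
  · left
    intro y
    rcases hdich y with hm | ha
    · exact hm
    · exact absurd (sub_neg.mpr (ha (by norm_num : (0:ℝ) < 1))) (not_lt.mpr (h y).le)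
  · right
    intro y
    rcases hdich y with hm | ha
    · exact absurd (sub_pos.mpr (hm (by norm_num : (0:ℝ) < 1))) (not_lt.mpr (h y).le)
    · exact ha

lemma uniform_mono_fst (e : Equiv.Perm (ℝ × ℝ)) (hec : Continuous e)
    (h1 : ∀ p, (e p).1 = p.1) :
    (∀ x, StrictMono fun y => (e (x, y)).2) ∨ (∀ x, StrictAnti fun y => (e (x, y)).2) := by
  have hcont : ∀ x, Continuous fun y => (e (x, y)).2 := fun x =>
    continuous_snd.comp (hec.comp (Continuous.prodMk_right x))
  have hinj : ∀ x, Function.Injective fun y => (e (x, y)).2 := by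
    intro x a b hab
    have : e (x, a) = e (x, b) := by
      refine Prod.ext ?_ hab
      rw [h1 (x, a), h1 (x, b)]
    simpa using e.injective this
  have hdich : ∀ x, StrictMono (fun y => (e (x, y)).2) ∨ StrictAnti fun y => (e (x, y)).2 :=
    fun x => (hcont x).strictMono_of_inj (hinj x)
  set D : ℝ → ℝ := fun x => (e (x, 1)).2 - (e (x, 0)).2 with hD
  have hDc : Continuous D := by
    apply Continuous.sub
    · exact continuous_snd.comp (hec.comp (by fun_prop))
    · exact continuous_snd.comp (hec.comp (by fun_prop))
  have hD0 : ∀ x, D x ≠ 0 := by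
    intro x h
    have : (e (x, 1)).2 = (e (x, 0)).2 := by simpa [hD, sub_eq_zero] using h
    exact one_ne_zero (hinj x this)
  have hsign : (∀ x, 0 < D x) ∨ ∀ x, D x < 0 := by
    by_contra h
    push_neg at h
    obtain ⟨⟨x₁, hx₁⟩, ⟨x₂, hx₂⟩⟩ := h
    have hx₁' : D x₁ < 0 := lt_of_le_of_ne hx₁ (hD0 x₁)
    have hx₂' : 0 < D x₂ := lt_of_le_of_ne hx₂ (Ne.symm (hD0 x₂))
    have : (0 : ℝ) ∈ Set.uIcc (D x₁) (D x₂) := by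
      rw [Set.mem_uIcc]; left; exact ⟨hx₁'.le, hx₂'.le⟩
    obtain ⟨x, _, hx⟩ := intermediate_value_uIcc (hDc.continuousOn (s := Set.uIcc x₁ x₂)) this
    exact hD0 x hx
  rcases hsign with h | h
  · left
    intro x
    rcases hdich x with hm | ha
    · exact hm
    · exact absurd (sub_neg.mpr (ha (by norm_num : (0:ℝ) < 1))) (not_lt.mpr (h x).le)
  · right
    intro x
    rcases hdich x with hm | ha
    · exact absurd (sub_pos.mpr (hm (by norm_num : (0:ℝ) < 1))) (not_lt.mpr (h x).le)
    · exact ha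


lemma mem_slitPlane_of_no_neg_mul {A B : ℂ} (hB : B ≠ 0)
    (h : ∀ r : ℝ, r ≤ 0 → A ≠ (r : ℂ) * B) :
    A / B ∈ Complex.slitPlane := by
  by_contra hz
  rw [Complex.mem_slitPlane_iff] at hz
  push_neg at hz
  obtain ⟨hre, him⟩ := hz
  have hAB : A = (A / B) * B := (div_mul_cancel₀ _ hB).symm
  have hz : (A / B) = ((A / B).re : ℂ) := by
    apply Complex.ext <;> simp [him]
  rw [hz] at hAB
  exact h (A / B).re hre hAB


/-- Applying a second-coordinate-preserving homeomorphism changes the winding lift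
by at most `2π`. -/
lemma step_snd {S : Set ℝ} (e : Equiv.Perm (ℝ × ℝ)) (hec : Continuous e)
    (h2 : ∀ p, (e p).2 = p.2) (Γ : ℝ → ℝ × ℝ) (hΓ : ContinuousOn Γ S) (c : ℝ × ℝ)
    (L : ℝ → ℂ) (hL : ContinuousOn L S)
    (hlift : ∀ t ∈ S, toC (Γ t) - toC c = Complex.exp (L t)) :
    ∃ M : ℝ → ℂ, ContinuousOn M S ∧
      (∀ t ∈ S, toC (e (Γ t)) - toC (e c) = Complex.exp (M t)) ∧
      ∀ s ∈ S, ∀ t ∈ S,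
        |(M t).im - (M s).im| ≤ |(L t).im - (L s).im| + 2 * Real.pi := by
  set f : ℝ → ℂ := fun t => toC (e (Γ t)) - toC (e c) with hf
  have hfc : ContinuousOn f S :=
    ((continuous_toC.comp hec).comp_continuousOn hΓ).sub continuousOn_const
  have hB0 : ∀ t ∈ S, toC (Γ t) - toC c ≠ 0 := fun t ht => by
    rw [hlift t ht]; exact Complex.exp_ne_zero _
  have hΓc : ∀ t ∈ S, Γ t ≠ c := by
    intro t ht hcon
    exact hB0 t ht (by rw [hcon, sub_self])
  have hfim : ∀ t, (f t).im = (toC (Γ t) - toC c).im := by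
    intro t
    simp only [hf, Complex.sub_im, toC_im]
    rw [h2 (Γ t), h2 c]
  have hf0 : ∀ t ∈ S, f t ≠ 0 := by
    intro t ht hcon
    have : toC (e (Γ t)) = toC (e c) := by rwa [sub_eq_zero] at hcon
    exact hΓc t ht (e.injective (toC_inj this))
  rcases uniform_mono_snd e hec h2 with hmono | hanti
  · -- orientation preserving: compare with `toC ∘ Γ - toC c` itself
    refine ratio_lift hL hlift hfc ?_
    intro t ht
    refine mem_slitPlane_of_no_neg_mul (hB0 t ht) ?_
    intro r hr hcon
    rcases eq_or_lt_of_le hr with rfl | hr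
    · exact hf0 t ht (by simpa using hcon)
    · -- r < 0 : compare imaginary parts, then real parts
      have him : (f t).im = r * (toC (Γ t) - toC c).im := by
        show (toC (e (Γ t)) - toC (e c)).im = _
        rw [hcon]; simp
      have him2 : (toC (Γ t) - toC c).im = 0 := by
        rw [hfim t] at him
        nlinarith [him]
      have hsnd : (Γ t).2 = c.2 := by
        have := him2; simp only [Complex.sub_im, toC_im] at this; linarith
      have hre0 : (toC (Γ t) - toC c).re ≠ 0 := by
        intro hcon2
        apply hB0 t ht
        apply Complex.ext <;> simp_all
      have hre : (f t).re = r * (toC (Γ t) - toC c).re := by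
        show (toC (e (Γ t)) - toC (e c)).re = _
        rw [hcon]; simp
      have hΓeq : Γ t = ((Γ t).1, c.2) := Prod.ext rfl hsnd
      have hfre : (f t).re = (e ((Γ t).1, c.2)).1 - (e (c.1, c.2)).1 := by
        simp only [hf, Complex.sub_re, toC_re]
        rw [← hΓeq]
      have hBre : (toC (Γ t) - toC c).re = (Γ t).1 - c.1 := by simp
      rcases lt_trichotomy (Γ t).1 c.1 with hlt | heq | hgt
      · have h1 : (f t).re < 0 := by
          rw [hfre]
          have := hmono c.2 hlt
          simpa [sub_neg] using this
        rw [hre, hBre] at h1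
        nlinarith
      · exact hre0 (by rw [hBre, heq, sub_self])
      · have h1 : 0 < (f t).re := by
          rw [hfre]
          have := hmono c.2 hgt
          simpa [sub_pos] using this
        rw [hre, hBre] at h1
        nlinarith
  · -- orientation reversing: compare with `-(conj (toC ∘ Γ - toC c))`
    set g : ℝ → ℂ := fun t => -((starRingEnd ℂ) (toC (Γ t) - toC c)) with hg
    set L' : ℝ → ℂ := fun t => (starRingEnd ℂ) (L t) + Real.pi * Complex.I with hL'def
    have hL'c : ContinuousOn L' S :=
      (continuous_conj.comp_continuousOn hL).add continuousOn_const
    have hglift : ∀ t ∈ S, g t = Complex.exp (L' t) := by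
      intro t ht
      rw [hg]
      simp only
      rw [hlift t ht, hL'def]
      simp only
      rw [Complex.exp_add, ← Complex.exp_conj, Complex.exp_pi_mul_I]
      ring
    have hrat : ∀ t ∈ S, f t / g t ∈ Complex.slitPlane := by
      intro t ht
      have hg0 : g t ≠ 0 := by rw [hglift t ht]; exact Complex.exp_ne_zero _
      refine mem_slitPlane_of_no_neg_mul hg0 ?_
      intro r hr hcon
      rcases eq_or_lt_of_le hr with rfl | hr
      · exact hf0 t ht (by simpa using hcon)
      · have hgim : (g t).im = (toC (Γ t) - toC c).im := by simp [hg]; ring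
        have hgre : (g t).re = -(toC (Γ t) - toC c).re := by simp [hg]
        have him : (f t).im = r * ((g t).im) := by
          rw [hcon]; simp
        rw [hgim] at him
        have him2 : (toC (Γ t) - toC c).im = 0 := by
          rw [hfim t] at him
          nlinarith [him]
        have hsnd : (Γ t).2 = c.2 := by
          have := him2; simp only [Complex.sub_im, toC_im] at this; linarith
        have hre0 : (toC (Γ t) - toC c).re ≠ 0 := by
          intro hcon2
          apply hB0 t ht
          apply Complex.ext <;> simp_all
        have hre : (f t).re = r * ((g t).re) := by
          rw [hcon]; simp
        rw [hgre] at hre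
        have hΓeq : Γ t = ((Γ t).1, c.2) := Prod.ext rfl hsnd
        have hfre : (f t).re = (e ((Γ t).1, c.2)).1 - (e (c.1, c.2)).1 := by
          simp only [hf, Complex.sub_re, toC_re]
          rw [← hΓeq]
        have hBre : (toC (Γ t) - toC c).re = (Γ t).1 - c.1 := by simp
        rcases lt_trichotomy (Γ t).1 c.1 with hlt | heq | hgt
        · have h1 : 0 < (f t).re := by
            rw [hfre]
            have := hanti c.2 hlt
            simpa [sub_pos] using this
          rw [hre, hBre] at h1
          nlinarith
        · exact hre0 (by rw [hBre, heq, sub_self])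
        · have h1 : (f t).re < 0 := by
            rw [hfre]
            have := hanti c.2 hgt
            simpa [sub_neg] using this
          rw [hre, hBre] at h1
          nlinarith
    obtain ⟨M, hMc, hMlift, hMbd⟩ := ratio_lift hL'c hglift hfc hrat
    refine ⟨M, hMc, hMlift, ?_⟩
    intro s hs t ht
    have hMb := hMbd s hs t ht
    have him' : ∀ u, (L' u).im = -(L u).im + Real.pi := by
      intro u
      simp [hL'def]
    rw [him' t, him' s] at hMb
    calc |(M t).im - (M s).im| ≤ |(-(L t).im + Real.pi) - (-(L s).im + Real.pi)| + 2 * Real.pi := hMb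
      _ = |(L t).im - (L s).im| + 2 * Real.pi := by
          rw [show (-(L t).im + Real.pi) - (-(L s).im + Real.pi) = -((L t).im - (L s).im) by ring,
            abs_neg]

/-- Applying a first-coordinate-preserving homeomorphism changes the winding lift
by at most `2π`. -/
lemma step_fst {S : Set ℝ} (e : Equiv.Perm (ℝ × ℝ)) (hec : Continuous e)
    (h1 : ∀ p, (e p).1 = p.1) (Γ : ℝ → ℝ × ℝ) (hΓ : ContinuousOn Γ S) (c : ℝ × ℝ)
    (L : ℝ → ℂ) (hL : ContinuousOn L S)
    (hlift : ∀ t ∈ S, toC (Γ t) - toC c = Complex.exp (L t)) :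
    ∃ M : ℝ → ℂ, ContinuousOn M S ∧
      (∀ t ∈ S, toC (e (Γ t)) - toC (e c) = Complex.exp (M t)) ∧
      ∀ s ∈ S, ∀ t ∈ S,
        |(M t).im - (M s).im| ≤ |(L t).im - (L s).im| + 2 * Real.pi := by
  set f : ℝ → ℂ := fun t => toC (e (Γ t)) - toC (e c) with hf
  have hfc : ContinuousOn f S :=
    ((continuous_toC.comp hec).comp_continuousOn hΓ).sub continuousOn_const
  have hB0 : ∀ t ∈ S, toC (Γ t) - toC c ≠ 0 := fun t ht => by
    rw [hlift t ht]; exact Complex.exp_ne_zero _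
  have hΓc : ∀ t ∈ S, Γ t ≠ c := by
    intro t ht hcon
    exact hB0 t ht (by rw [hcon, sub_self])
  have hfre : ∀ t, (f t).re = (toC (Γ t) - toC c).re := by
    intro t
    simp only [hf, Complex.sub_re, toC_re]
    rw [h1 (Γ t), h1 c]
  have hf0 : ∀ t ∈ S, f t ≠ 0 := by
    intro t ht hcon
    have : toC (e (Γ t)) = toC (e c) := by rwa [sub_eq_zero] at hcon
    exact hΓc t ht (e.injective (toC_inj this))
  rcases uniform_mono_fst e hec h1 with hmono | hanti
  · refine ratio_lift hL hlift hfc ?_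
    intro t ht
    refine mem_slitPlane_of_no_neg_mul (hB0 t ht) ?_
    intro r hr hcon
    rcases eq_or_lt_of_le hr with rfl | hr
    · exact hf0 t ht (by simpa using hcon)
    · have hre : (f t).re = r * (toC (Γ t) - toC c).re := by
        show (toC (e (Γ t)) - toC (e c)).re = _
        rw [hcon]; simp
      have hre2 : (toC (Γ t) - toC c).re = 0 := by
        rw [hfre t] at hre
        nlinarith [hre]
      have hfst : (Γ t).1 = c.1 := by
        have := hre2; simp only [Complex.sub_re, toC_re] at this; linarith
      have him0 : (toC (Γ t) - toC c).im ≠ 0 := by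
        intro hcon2
        apply hB0 t ht
        apply Complex.ext <;> simp_all
      have him : (f t).im = r * (toC (Γ t) - toC c).im := by
        show (toC (e (Γ t)) - toC (e c)).im = _
        rw [hcon]; simp
      have hΓeq : Γ t = (c.1, (Γ t).2) := Prod.ext hfst rfl
      have hfim : (f t).im = (e (c.1, (Γ t).2)).2 - (e (c.1, c.2)).2 := by
        simp only [hf, Complex.sub_im, toC_im]
        rw [← hΓeq]
      have hBim : (toC (Γ t) - toC c).im = (Γ t).2 - c.2 := by simp
      rcases lt_trichotomy (Γ t).2 c.2 with hlt | heq | hgt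
      · have hsign : (f t).im < 0 := by
          rw [hfim]
          have := hmono c.1 hlt
          simpa [sub_neg] using this
        rw [him, hBim] at hsign
        nlinarith
      · exact him0 (by rw [hBim, heq, sub_self])
      · have hsign : 0 < (f t).im := by
          rw [hfim]
          have := hmono c.1 hgt
          simpa [sub_pos] using this
        rw [him, hBim] at hsign
        nlinarith
  · set g : ℝ → ℂ := fun t => (starRingEnd ℂ) (toC (Γ t) - toC c) with hg
    set L' : ℝ → ℂ := fun t => (starRingEnd ℂ) (L t) with hL'def
    have hL'c : ContinuousOn L' S := continuous_conj.comp_continuousOn hL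
    have hglift : ∀ t ∈ S, g t = Complex.exp (L' t) := by
      intro t ht
      rw [hg]
      simp only
      rw [hlift t ht, hL'def]
      simp only
      rw [← Complex.exp_conj]
    have hrat : ∀ t ∈ S, f t / g t ∈ Complex.slitPlane := by
      intro t ht
      have hg0 : g t ≠ 0 := by rw [hglift t ht]; exact Complex.exp_ne_zero _
      refine mem_slitPlane_of_no_neg_mul hg0 ?_
      intro r hr hcon
      rcases eq_or_lt_of_le hr with rfl | hr
      · exact hf0 t ht (by simpa using hcon)
      · have hgim : (g t).im = -(toC (Γ t) - toC c).im := by simp [hg]; ring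
        have hgre : (g t).re = (toC (Γ t) - toC c).re := by simp [hg]
        have hre : (f t).re = r * ((g t).re) := by
          rw [hcon]; simp
        rw [hgre] at hre
        have hre2 : (toC (Γ t) - toC c).re = 0 := by
          rw [hfre t] at hre
          nlinarith [hre]
        have hfst : (Γ t).1 = c.1 := by
          have := hre2; simp only [Complex.sub_re, toC_re] at this; linarith
        have him0 : (toC (Γ t) - toC c).im ≠ 0 := by
          intro hcon2
          apply hB0 t ht
          apply Complex.ext <;> simp_all
        have him : (f t).im = r * ((g t).im) := by
          rw [hcon]; simp
        rw [hgim] at him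
        have hΓeq : Γ t = (c.1, (Γ t).2) := Prod.ext hfst rfl
        have hfim : (f t).im = (e (c.1, (Γ t).2)).2 - (e (c.1, c.2)).2 := by
          simp only [hf, Complex.sub_im, toC_im]
          rw [← hΓeq]
        have hBim : (toC (Γ t) - toC c).im = (Γ t).2 - c.2 := by simp
        rcases lt_trichotomy (Γ t).2 c.2 with hlt | heq | hgt
        · have hsign : 0 < (f t).im := by
            rw [hfim]
            have := hanti c.1 hlt
            simpa [sub_pos] using this
          rw [him, hBim] at hsign
          nlinarith
        · exact him0 (by rw [hBim, heq, sub_self])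
        · have hsign : (f t).im < 0 := by
            rw [hfim]
            have := hanti c.1 hgt
            simpa [sub_neg] using this
          rw [him, hBim] at hsign
          nlinarith
    obtain ⟨M, hMc, hMlift, hMbd⟩ := ratio_lift hL'c hglift hfc hrat
    refine ⟨M, hMc, hMlift, ?_⟩
    intro s hs t ht
    have hMb := hMbd s hs t ht
    have him' : ∀ u, (L' u).im = -(L u).im := by
      intro u
      simp [hL'def]
    rw [him' t, him' s] at hMb
    calc |(M t).im - (M s).im| ≤ |(-(L t).im) - (-(L s).im)| + 2 * Real.pi := hMb
      _ = |(L t).im - (L s).im| + 2 * Real.pi := by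
          rw [show (-(L t).im) - (-(L s).im) = -((L t).im - (L s).im) by ring, abs_neg]


/-- The generating sets. -/
def Good (l : List (Equiv.Perm (ℝ × ℝ))) : Prop :=
  ∀ g ∈ l,
    (Continuous g ∧ Continuous g.symm ∧ ∀ p, (g p).2 = p.2) ∨
    (Continuous g ∧ Continuous g.symm ∧ ∀ p, (g p).1 = p.1)

lemma good_prod_continuous (l : List (Equiv.Perm (ℝ × ℝ))) (hl : Good l) :
    Continuous (l.prod : Equiv.Perm (ℝ × ℝ)) := by
  induction l with
  | nil => simpa [List.prod_nil] using continuous_id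
  | cons e l' ih =>
    have he : Continuous e := by rcases hl e List.mem_cons_self with h | h <;> exact h.1
    have hl' : Good l' := fun g hg => hl g (List.mem_cons_of_mem _ hg)
    rw [List.prod_cons]
    have : ⇑(e * l'.prod) = ⇑e ∘ ⇑l'.prod := by
      funext x; simp [Equiv.Perm.mul_apply]
    rw [this]
    exact he.comp (ih hl')

/-- Main induction: the winding of the image of the vertical segment around the image
of the origin is at most `2π` per factor. -/
lemma main_bound (l : List (Equiv.Perm (ℝ × ℝ))) (hl : Good l) :
    ∃ L : ℝ → ℂ, ContinuousOn L (Ioc (0:ℝ) 1) ∧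
      (∀ t ∈ Ioc (0:ℝ) 1,
        toC (l.prod ((0:ℝ), t)) - toC (l.prod ((0:ℝ), (0:ℝ))) = Complex.exp (L t)) ∧
      ∀ s ∈ Ioc (0:ℝ) 1, ∀ t ∈ Ioc (0:ℝ) 1,
        |(L t).im - (L s).im| ≤ 2 * Real.pi * l.length := by
  induction l with
  | nil =>
    refine ⟨fun t => (Real.log t : ℂ) + (Real.pi / 2 : ℝ) * Complex.I, ?_, ?_, ?_⟩
    · apply ContinuousOn.add
      · exact Complex.continuous_ofReal.comp_continuousOn
          (Real.continuousOn_log.mono (by intro x hx; simp; exact ne_of_gt hx.1))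
      · exact continuousOn_const
    · intro t ht
      rw [List.prod_nil]
      simp only [Equiv.Perm.one_apply]
      rw [toC_def, toC_def]
      simp only
      rw [Complex.exp_add, Complex.exp_mul_I]
      rw [← Complex.ofReal_exp, Real.exp_log ht.1]
      rw [← Complex.ofReal_cos, ← Complex.ofReal_sin,
        Real.cos_pi_div_two, Real.sin_pi_div_two]
      push_cast
      ring
    · intro s hs t ht
      simp only [Complex.add_im, Complex.ofReal_im, Complex.mul_im, Complex.ofReal_re,
        Complex.I_im, Complex.I_re, List.length_nil]
      norm_num
  | cons e l' ih =>
    have he := hl e List.mem_cons_self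
    have hl' : Good l' := fun g hg => hl g (List.mem_cons_of_mem _ hg)
    obtain ⟨L, hLc, hlift, hbd⟩ := ih hl'
    set Γ : ℝ → ℝ × ℝ := fun t => l'.prod ((0:ℝ), t) with hΓdef
    have hΓ : ContinuousOn Γ (Ioc (0:ℝ) 1) :=
      ((good_prod_continuous l' hl').comp (by fun_prop)).continuousOn
    have hprod : ∀ p : ℝ × ℝ, (e :: l').prod p = e (l'.prod p) := by
      intro p; rw [List.prod_cons]; exact Equiv.Perm.mul_apply _ _ _
    have hlen : ((e :: l').length : ℝ) = l'.length + 1 := by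
      push_cast [List.length_cons]; ring
    rcases he with hL2 | hR2
    · obtain ⟨M, hMc, hMlift, hMbd⟩ :=
        step_snd e hL2.1 hL2.2.2 Γ hΓ (l'.prod ((0:ℝ), (0:ℝ))) L hLc hlift
      refine ⟨M, hMc, ?_, ?_⟩
      · intro t ht
        rw [hprod, hprod]
        exact hMlift t ht
      · intro s hs t ht
        calc |(M t).im - (M s).im| ≤ |(L t).im - (L s).im| + 2 * Real.pi := hMbd s hs t ht
          _ ≤ 2 * Real.pi * l'.length + 2 * Real.pi := by
              have := hbd s hs t ht; linarith
          _ = 2 * Real.pi * ((e :: l').length : ℝ) := by rw [hlen]; ring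
    · obtain ⟨M, hMc, hMlift, hMbd⟩ :=
        step_fst e hR2.1 hR2.2.2 Γ hΓ (l'.prod ((0:ℝ), (0:ℝ))) L hLc hlift
      refine ⟨M, hMc, ?_, ?_⟩
      · intro t ht
        rw [hprod, hprod]
        exact hMlift t ht
      · intro s hs t ht
        calc |(M t).im - (M s).im| ≤ |(L t).im - (L s).im| + 2 * Real.pi := hMbd s hs t ht
          _ ≤ 2 * Real.pi * l'.length + 2 * Real.pi := by
              have := hbd s hs t ht; linarith
          _ = 2 * Real.pi * ((e :: l').length : ℝ) := by rw [hlen]; ring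


/-- The infinite twist map `z ↦ e^{i/|z|} z`. -/
def Tfun (z : ℂ) : ℂ := Complex.exp (((‖z‖⁻¹ : ℝ) : ℂ) * Complex.I) * z

/-- Its inverse `z ↦ e^{-i/|z|} z`. -/
def Sfun (z : ℂ) : ℂ := Complex.exp (-((‖z‖⁻¹ : ℝ) : ℂ) * Complex.I) * z

lemma abs_Tfun (z : ℂ) : ‖Tfun z‖ = ‖z‖ := by
  rw [Tfun, norm_mul, Complex.norm_exp_ofReal_mul_I, one_mul]

lemma abs_Sfun (z : ℂ) : ‖Sfun z‖ = ‖z‖ := by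
  rw [Sfun, norm_mul]
  rw [show -((‖z‖⁻¹ : ℝ) : ℂ) * Complex.I
      = ((-‖z‖⁻¹ : ℝ) : ℂ) * Complex.I by push_cast; ring]
  rw [Complex.norm_exp_ofReal_mul_I, one_mul]

lemma Sfun_Tfun (z : ℂ) : Sfun (Tfun z) = z := by
  rw [Sfun, abs_Tfun, Tfun, ← mul_assoc, ← Complex.exp_add]
  rw [show -((‖z‖⁻¹ : ℝ) : ℂ) * Complex.I
      + ((‖z‖⁻¹ : ℝ) : ℂ) * Complex.I = 0 by ring]
  rw [Complex.exp_zero, one_mul]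

lemma Tfun_Sfun (z : ℂ) : Tfun (Sfun z) = z := by
  rw [Tfun, abs_Sfun, Sfun, ← mul_assoc, ← Complex.exp_add]
  rw [show ((‖z‖⁻¹ : ℝ) : ℂ) * Complex.I
      + -((‖z‖⁻¹ : ℝ) : ℂ) * Complex.I = 0 by ring]
  rw [Complex.exp_zero, one_mul]

lemma continuous_Tfun : Continuous Tfun := by
  rw [continuous_iff_continuousAt]
  intro z
  by_cases hz : z = 0
  · subst hz
    have h0 : Tfun 0 = 0 := by simp [Tfun]
    rw [ContinuousAt, h0]
    apply squeeze_zero_norm (a := fun w : ℂ => ‖w‖)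
    · intro w
      have : ‖Tfun w‖ = ‖w‖ := abs_Tfun w
      exact le_of_eq this
    · simpa using tendsto_norm_zero
  · have h1 : ContinuousAt (fun w : ℂ => ‖w‖⁻¹) z :=
      (continuous_norm.continuousAt).inv₀ (by simpa using hz)
    have h2 : ContinuousAt (fun w : ℂ =>
        Complex.exp (((‖w‖⁻¹ : ℝ) : ℂ) * Complex.I)) z := by
      apply Complex.continuous_exp.continuousAt.comp
      exact (Complex.continuous_ofReal.continuousAt.comp h1).mul continuousAt_const
    exact h2.mul continuousAt_id

lemma continuous_Sfun : Continuous Sfun := by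
  rw [continuous_iff_continuousAt]
  intro z
  by_cases hz : z = 0
  · subst hz
    have h0 : Sfun 0 = 0 := by simp [Sfun]
    rw [ContinuousAt, h0]
    apply squeeze_zero_norm (a := fun w : ℂ => ‖w‖)
    · intro w
      exact le_of_eq (abs_Sfun w)
    · simpa using tendsto_norm_zero
  · have h1 : ContinuousAt (fun w : ℂ => ‖w‖⁻¹) z :=
      (continuous_norm.continuousAt).inv₀ (by simpa using hz)
    have h2 : ContinuousAt (fun w : ℂ =>
        Complex.exp (-((‖w‖⁻¹ : ℝ) : ℂ) * Complex.I)) z := by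
      apply Complex.continuous_exp.continuousAt.comp
      exact ((Complex.continuous_ofReal.continuousAt.comp h1).neg).mul continuousAt_const
    exact h2.mul continuousAt_id


/-- The twist as a permutation of the plane. -/
def phi : Equiv.Perm (ℝ × ℝ) where
  toFun p := ((Tfun (toC p)).re, (Tfun (toC p)).im)
  invFun p := ((Sfun (toC p)).re, (Sfun (toC p)).im)
  left_inv p := by
    simp only [toC_mk', Sfun_Tfun]
    exact Prod.ext (toC_re p) (toC_im p)
  right_inv p := by
    simp only [toC_mk', Tfun_Sfun]
    exact Prod.ext (toC_re p) (toC_im p)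

lemma continuous_phi : Continuous phi := by
  show Continuous fun p => ((Tfun (toC p)).re, (Tfun (toC p)).im)
  exact (Complex.continuous_re.comp (continuous_Tfun.comp continuous_toC)).prodMk
    (Complex.continuous_im.comp (continuous_Tfun.comp continuous_toC))

lemma continuous_phi_symm : Continuous phi.symm := by
  show Continuous fun p => ((Sfun (toC p)).re, (Sfun (toC p)).im)
  exact (Complex.continuous_re.comp (continuous_Sfun.comp continuous_toC)).prodMk
    (Complex.continuous_im.comp (continuous_Sfun.comp continuous_toC))

lemma toC_phi (p : ℝ × ℝ) : toC (phi p) = Tfun (toC p) := toC_mk' _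

/-- Explicit winding lift for the twist curve. -/
lemma phi_lift :
    ∀ t ∈ Ioc (0:ℝ) 1,
      toC (phi ((0:ℝ), t)) - toC (phi ((0:ℝ), (0:ℝ)))
        = Complex.exp ((Real.log t : ℂ) + ((t⁻¹ + Real.pi / 2 : ℝ) : ℂ) * Complex.I) := by
  intro t ht
  have h00 : toC ((0:ℝ), (0:ℝ)) = 0 := by rw [toC_def]; simp
  have hphi0 : toC (phi ((0:ℝ), (0:ℝ))) = 0 := by
    rw [toC_phi, h00]
    simp [Tfun]
  have h0t : toC ((0:ℝ), t) = (t : ℂ) * Complex.I := by rw [toC_def]; simp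
  have habs : ‖toC ((0:ℝ), t)‖ = t := by
    rw [h0t, norm_mul, Complex.norm_I, Complex.norm_real, Real.norm_eq_abs, abs_of_pos ht.1, mul_one]
  rw [toC_phi, hphi0, sub_zero, Tfun, habs, h0t]
  rw [Complex.exp_add]
  rw [show ((t⁻¹ + Real.pi / 2 : ℝ) : ℂ) * Complex.I
      = ((t⁻¹ : ℝ) : ℂ) * Complex.I + ((Real.pi / 2 : ℝ) : ℂ) * Complex.I by push_cast; ring]
  rw [Complex.exp_add]
  rw [← Complex.ofReal_exp, Real.exp_log ht.1]
  simp only [Complex.exp_mul_I]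
  rw [← Complex.ofReal_cos, ← Complex.ofReal_sin, ← Complex.ofReal_cos, ← Complex.ofReal_sin,
    Real.cos_pi_div_two, Real.sin_pi_div_two]
  push_cast
  ring


lemma phi_ne_prod (l : List (Equiv.Perm (ℝ × ℝ))) (hl : Good l) : phi ≠ l.prod := by
  intro heq
  obtain ⟨L, hLc, hlift, hbd⟩ := main_bound l hl
  set B : ℝ := 2 * Real.pi * l.length with hBdef
  have hB0 : (0:ℝ) ≤ B := by positivity
  set Lφ : ℝ → ℂ := fun t =>
    (Real.log t : ℂ) + ((t⁻¹ + Real.pi / 2 : ℝ) : ℂ) * Complex.I with hLφdef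
  have h1mem : (1:ℝ) ∈ Ioc (0:ℝ) 1 := ⟨zero_lt_one, le_rfl⟩
  have hsame : ∀ t ∈ Ioc (0:ℝ) 1, Complex.exp (L t) = Complex.exp (Lφ t) := by
    intro t ht
    have h2 := hlift t ht
    rw [← heq] at h2
    rw [← h2]
    exact phi_lift t ht
  have hLφim : ∀ t : ℝ, (Lφ t).im = t⁻¹ + Real.pi / 2 := by
    intro t; simp [hLφdef]
  set d : ℝ → ℝ := fun t => (L t).im - (t⁻¹ + Real.pi / 2) with hddef
  have hint : ∀ t ∈ Ioc (0:ℝ) 1, ∃ n : ℤ, d t = n * (2 * Real.pi) := by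
    intro t ht
    have h1 : Complex.exp (L t - Lφ t) = 1 := by
      rw [Complex.exp_sub, hsame t ht, div_self (Complex.exp_ne_zero _)]
    obtain ⟨n, hn⟩ := Complex.exp_eq_one_iff.mp h1
    refine ⟨n, ?_⟩
    have h2 := congrArg Complex.im hn
    simp only [Complex.sub_im] at h2
    rw [hLφim t] at h2
    have h3 : ((n : ℂ) * (2 * Real.pi * Complex.I)).im = n * (2 * Real.pi) := by
      simp
    rw [h3] at h2
    exact h2
  have hdc : ContinuousOn d (Ioc (0:ℝ) 1) := by
    apply ContinuousOn.sub (Complex.continuous_im.comp_continuousOn hLc)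
    apply ContinuousOn.add
    · exact continuousOn_inv₀.mono (by intro x hx; simp; exact ne_of_gt hx.1)
    · exact continuousOn_const
  have hconst : ∀ t ∈ Ioc (0:ℝ) 1, d t = d 1 := by
    intro t ht
    by_contra hne
    obtain ⟨nt, hnt⟩ := hint t ht
    obtain ⟨n1, hn1⟩ := hint 1 h1mem
    have hI : uIcc t 1 ⊆ Ioc (0:ℝ) 1 := Set.ordConnected_Ioc.uIcc_subset ht h1mem
    have hcont : ContinuousOn d (uIcc t 1) := hdc.mono hI
    have hpi := Real.pi_pos
    have hne' : nt ≠ n1 := by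
      intro hcon; apply hne; rw [hnt, hn1, hcon]
    have hgap : 2 * Real.pi ≤ |d t - d 1| := by
      rw [hnt, hn1, show (nt : ℝ) * (2*Real.pi) - n1 * (2*Real.pi) = (nt - n1 : ℤ) * (2*Real.pi) by push_cast; ring,
        abs_mul, abs_of_pos (by linarith : (0:ℝ) < 2*Real.pi)]
      have h5 : (1:ℝ) ≤ |((nt - n1 : ℤ) : ℝ)| := by
        rw [← Int.cast_abs]
        have h6 : nt - n1 ≠ 0 := sub_ne_zero.mpr hne'
        exact_mod_cast Int.one_le_abs (by omega)
      nlinarith [h5, Real.pi_pos]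
    set v : ℝ := min (d t) (d 1) + Real.pi with hvdef
    have hv : v ∈ uIcc (d t) (d 1) := by
      rw [Set.uIcc_eq_union]
      rcases le_total (d t) (d 1) with hle | hle
      · left
        constructor
        · simp [hvdef, min_eq_left hle]; linarith
        · have : |d t - d 1| = d 1 - d t := by
            rw [abs_sub_comm, _root_.abs_of_nonneg (by linarith)]
          rw [this] at hgap
          simp [hvdef, min_eq_left hle]; linarith
      · right
        constructor
        · simp [hvdef, min_eq_right hle]; linarith
        · have : |d t - d 1| = d t - d 1 := _root_.abs_of_nonneg (by linarith)
          rw [this] at hgap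
          simp [hvdef, min_eq_right hle]; linarith
    obtain ⟨u, hu, hduv⟩ := intermediate_value_uIcc hcont hv
    obtain ⟨nu, hnu⟩ := hint u (hI hu)
    rcases le_total (d t) (d 1) with hle | hle
    · have : (nu : ℝ) * (2*Real.pi) = nt * (2*Real.pi) + Real.pi := by
        rw [← hnu, hduv, hvdef, min_eq_left hle, hnt]
      have h2 : ((2 * (nu - nt) - 1 : ℤ) : ℝ) * Real.pi = 0 := by
        push_cast
        linear_combination this
      have h3 : ((2 * (nu - nt) - 1 : ℤ) : ℝ) = 0 := by
        rcases mul_eq_zero.mp h2 with h | h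
        · exact h
        · exact absurd h (ne_of_gt hpi)
      have h4 : (2 * (nu - nt) - 1 : ℤ) = 0 := by exact_mod_cast h3
      omega
    · have : (nu : ℝ) * (2*Real.pi) = n1 * (2*Real.pi) + Real.pi := by
        rw [← hnu, hduv, hvdef, min_eq_right hle, hn1]
      have h2 : ((2 * (nu - n1) - 1 : ℤ) : ℝ) * Real.pi = 0 := by
        push_cast
        linear_combination this
      have h3 : ((2 * (nu - n1) - 1 : ℤ) : ℝ) = 0 := by
        rcases mul_eq_zero.mp h2 with h | h
        · exact h
        · exact absurd h (ne_of_gt hpi)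
      have h4 : (2 * (nu - n1) - 1 : ℤ) = 0 := by exact_mod_cast h3
      omega
  -- now derive the contradiction
  set t0 : ℝ := (B + 2)⁻¹ with ht0def
  have ht0pos : (0:ℝ) < t0 := by rw [ht0def]; positivity
  have ht0le : t0 ≤ 1 := by
    rw [ht0def]
    apply inv_le_one_of_one_le₀
    linarith
  have ht0mem : t0 ∈ Ioc (0:ℝ) 1 := ⟨ht0pos, ht0le⟩
  have hb := hbd t0 ht0mem 1 h1mem
  have he1 : (L 1).im = d 1 + (1 + Real.pi / 2) := by simp [hddef]
  have het0 : (L t0).im = d t0 + (t0⁻¹ + Real.pi / 2) := by simp [hddef]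
  have hdt0 : d t0 = d 1 := hconst t0 ht0mem
  have hinv : t0⁻¹ = B + 2 := by rw [ht0def, inv_inv]
  rw [he1, het0, hdt0, hinv] at hb
  have : |(d 1 + (1 + Real.pi / 2)) - (d 1 + (B + 2 + Real.pi / 2))| = B + 1 := by
    rw [show (d 1 + (1 + Real.pi / 2)) - (d 1 + (B + 2 + Real.pi / 2)) = -(B+1) by ring, abs_neg,
      _root_.abs_of_nonneg (by linarith)]
  rw [this] at hb
  linarith

lemma good_singleton_inv (g : Equiv.Perm (ℝ × ℝ))
    (hg : (Continuous g ∧ Continuous g.symm ∧ ∀ p, (g p).2 = p.2) ∨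
          (Continuous g ∧ Continuous g.symm ∧ ∀ p, (g p).1 = p.1)) :
    (Continuous ⇑g⁻¹ ∧ Continuous ⇑(g⁻¹).symm ∧ ∀ p, (g⁻¹ p).2 = p.2) ∨
    (Continuous ⇑g⁻¹ ∧ Continuous ⇑(g⁻¹).symm ∧ ∀ p, (g⁻¹ p).1 = p.1) := by
  have hinv : (g⁻¹ : Equiv.Perm (ℝ × ℝ)) = g.symm := rfl
  have hsymm : (g⁻¹ : Equiv.Perm (ℝ × ℝ)).symm = g := by rw [hinv]; exact g.symm_symm
  rcases hg with ⟨h1, h2, h3⟩ | ⟨h1, h2, h3⟩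
  · left
    refine ⟨by rw [hinv]; exact h2, by rw [hsymm]; exact h1, ?_⟩
    intro p
    have := h3 (g⁻¹ p)
    rw [show g (g⁻¹ p) = p from g.apply_symm_apply p] at this
    exact this.symm
  · right
    refine ⟨by rw [hinv]; exact h2, by rw [hsymm]; exact h1, ?_⟩
    intro p
    have := h3 (g⁻¹ p)
    rw [show g (g⁻¹ p) = p from g.apply_symm_apply p] at this
    exact this.symm

lemma mem_closure_gives_list (x : Equiv.Perm (ℝ × ℝ))
    (hx : x ∈ Subgroup.closure
        ({g : Equiv.Perm (ℝ × ℝ) |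
            Continuous g ∧ Continuous g.symm ∧ ∀ p, (g p).2 = p.2} ∪
         {g : Equiv.Perm (ℝ × ℝ) |
            Continuous g ∧ Continuous g.symm ∧ ∀ p, (g p).1 = p.1})) :
    ∃ l : List (Equiv.Perm (ℝ × ℝ)), Good l ∧ x = l.prod := by
  refine Subgroup.closure_induction
    (p := fun y _ => ∃ l : List (Equiv.Perm (ℝ × ℝ)), Good l ∧ y = l.prod)
    ?_ ?_ ?_ ?_ hx
  · intro y hy
    refine ⟨[y], ?_, by simp⟩
    intro g hg
    rw [List.mem_singleton] at hg
    subst hg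
    rcases hy with hy | hy
    · exact Or.inl hy
    · exact Or.inr hy
  · exact ⟨[], by intro g hg; simp at hg, by simp⟩
  · rintro y z _ _ ⟨ly, hly, rfl⟩ ⟨lz, hlz, rfl⟩
    refine ⟨ly ++ lz, ?_, by rw [List.prod_append]⟩
    intro g hg
    rcases List.mem_append.mp hg with h | h
    · exact hly g h
    · exact hlz g h
  · rintro y _ ⟨ly, hly, rfl⟩
    refine ⟨(ly.map fun g => g⁻¹).reverse, ?_, (List.prod_inv_reverse ly)⟩
    intro g hg
    rw [List.mem_reverse, List.mem_map] at hg
    obtain ⟨a, ha, rfl⟩ := hg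
    exact good_singleton_inv a (hly a ha)


end HomeoAlt
end



/-- There is a self-homeomorphism of the plane `ℝ × ℝ` (here: a permutation that is
continuous with continuous inverse) which does not lie in the subgroup generated by
the homeomorphisms preserving the second coordinate (`G_L`) together with those
preserving the first coordinate (`G_R`); in particular it is not equal to any finite
product of elements of `G_L ∪ G_R`. -/
theorem homeo_plane_not_generated_by_alternations :
    ∃ φ : Equiv.Perm (ℝ × ℝ), Continuous φ ∧ Continuous φ.symm ∧
      φ ∉ Subgroup.closure
        ({g : Equiv.Perm (ℝ × ℝ) |
            Continuous g ∧ Continuous g.symm ∧ ∀ p, (g p).2 = p.2} ∪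
         {g : Equiv.Perm (ℝ × ℝ) |
            Continuous g ∧ Continuous g.symm ∧ ∀ p, (g p).1 = p.1}) ∧
      ∀ l : List (Equiv.Perm (ℝ × ℝ)),
        (∀ g ∈ l,
          (Continuous g ∧ Continuous g.symm ∧ ∀ p, (g p).2 = p.2) ∨
          (Continuous g ∧ Continuous g.symm ∧ ∀ p, (g p).1 = p.1)) →
        φ ≠ l.prod := by
  refine ⟨HomeoAlt.phi, HomeoAlt.continuous_phi, HomeoAlt.continuous_phi_symm, ?_, ?_⟩
  · intro hmem
    obtain ⟨l, hl, heq⟩ := HomeoAlt.mem_closure_gives_list _ hmem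
    exact HomeoAlt.phi_ne_prod l hl heq
  · intro l hl
    exact HomeoAlt.phi_ne_prod l hl
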